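/- Let k be a field and let L = FractionRing (MvPolynomial (Fin 3) k) = k(x,y,z) with variables x, y, z. Suppose f, g : L → L are k-linear maps satisfying, for all v ∈ L: g(v) = f(v), g(x·v) = x·f(v), g(y·v) = y·f(v), and g(z·v) = z·f(v). Then there exists c ∈ L such that f(v) = c·v and g(v) = c·v for all v ∈ L. -/

import Mathlib

/-- The image of the variable `X i` in the rational function field `k(x, y, z)`,
realized as the fraction field of the polynomial ring `k[x, y, z]`. -/
noncomputable def genVar (k : Type) [Field k] (i : Fin 3) :
    FractionRing (MvPolynomial (Fin 3) k) :=
  algebraMap (MvPolynomial (Fin 3) k) (FractionRing (MvPolynomial (Fin 3) k))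
    (MvPolynomial.X i)

/-- Let `L = k(x, y, z)`.  If `f, g : L → L` are `k`-linear maps such that
`g v = f v`, `g (x * v) = x * f v`, `g (y * v) = y * f v` and `g (z * v) = z * f v`
for all `v ∈ L`, then there is a `c ∈ L` with `f v = c * v` and `g v = c * v`
for all `v`. -/
theorem endomorphism_of_kronecker_generic_rep (k : Type) [Field k]
    (f g : FractionRing (MvPolynomial (Fin 3) k) →ₗ[k] FractionRing (MvPolynomial (Fin 3) k))
    (h1 : ∀ v, g v = f v)
    (hx : ∀ v, g (genVar k 0 * v) = genVar k 0 * f v)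
    (hy : ∀ v, g (genVar k 1 * v) = genVar k 1 * f v)
    (hz : ∀ v, g (genVar k 2 * v) = genVar k 2 * f v) :
    ∃ c : FractionRing (MvPolynomial (Fin 3) k),
      (∀ v, f v = c * v) ∧ (∀ v, g v = c * v) := by
  let φ : MvPolynomial (Fin 3) k →+* FractionRing (MvPolynomial (Fin 3) k) :=
    algebraMap (MvPolynomial (Fin 3) k) (FractionRing (MvPolynomial (Fin 3) k))
  have hX : ∀ (i : Fin 3) v, f (φ (MvPolynomial.X i) * v) = φ (MvPolynomial.X i) * f v := by
    intro i v
    fin_cases i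
    · rw [← h1]; exact hx v
    · rw [← h1]; exact hy v
    · rw [← h1]; exact hz v
  have hpoly : ∀ (p : MvPolynomial (Fin 3) k) v, f (φ p * v) = φ p * f v := by
    intro p
    induction p using MvPolynomial.induction_on with
    | C a =>
      intro v
      have hC : φ (MvPolynomial.C a) =
          algebraMap k (FractionRing (MvPolynomial (Fin 3) k)) a := by
        rw [← MvPolynomial.algebraMap_eq,
          ← IsScalarTower.algebraMap_apply k (MvPolynomial (Fin 3) k)]
      rw [hC, ← Algebra.smul_def, map_smul, Algebra.smul_def]
    | add p q hp hq =>
      intro v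
      rw [φ.map_add, add_mul, map_add, hp, hq, add_mul]
    | mul_X p i hp =>
      intro v
      rw [φ.map_mul, mul_comm (φ p), mul_assoc, hX, hp]; ring
  have key : ∀ (a v : FractionRing (MvPolynomial (Fin 3) k)), f (a * v) = a * f v := by
    intro a v
    obtain ⟨p, q, hq, hdiv⟩ := IsFractionRing.div_surjective (A := MvPolynomial (Fin 3) k) a
    have hq0 : φ q ≠ 0 := IsFractionRing.to_map_ne_zero_of_mem_nonZeroDivisors hq
    apply mul_left_cancel₀ hq0
    have h1' : φ q * (a * v) = φ p * v := by
      rw [← hdiv]; change φ q * (φ p / φ q * v) = φ p * v; field_simp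
    rw [← hpoly, h1', hpoly, ← hdiv]
    change φ p * f v = φ q * (φ p / φ q * f v)
    field_simp
  refine ⟨f 1, fun v => ?_, fun v => ?_⟩
  · have := key v 1
    rw [mul_one] at this
    rw [this, mul_comm]
  · rw [h1]
    have := key v 1
    rw [mul_one] at this
    rw [this, mul_comm]
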